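/- For any four jointly distributed random variables X, Y, W, A on a finite probability space, H(W|A) + I(X:Y|W,A) ≤ I(X:Y|A) + H(W|X,A) + H(W|Y,A). -/
import Mathlib


open scoped BigOperators

namespace PaperIngleton

open Classical in
/-- Probability of an event under a pmf `p` on a finite sample space. -/
noncomputable def prob {Ω : Type*} [Fintype Ω] (p : Ω → ℝ) (E : Ω → Prop) : ℝ :=
  ∑ ω, if E ω then p ω else 0

/-- Shannon entropy of a finitely-valued random variable `X` under pmf `p`. -/
noncomputable def ent {Ω S : Type*} [Fintype Ω] [Fintype S] (p : Ω → ℝ) (X : Ω → S) : ℝ :=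
  -∑ s : S, prob p (fun ω => X ω = s) * Real.log (prob p (fun ω => X ω = s))

/-- Conditional entropy `H(X|Y)`. -/
noncomputable def condEnt {Ω S T : Type*} [Fintype Ω] [Fintype S] [Fintype T]
    (p : Ω → ℝ) (X : Ω → S) (Y : Ω → T) : ℝ :=
  ent p (fun ω => (X ω, Y ω)) - ent p Y

/-- Mutual information `I(X:Y)`. -/
noncomputable def mi {Ω S T : Type*} [Fintype Ω] [Fintype S] [Fintype T]
    (p : Ω → ℝ) (X : Ω → S) (Y : Ω → T) : ℝ :=
  ent p X + ent p Y - ent p (fun ω => (X ω, Y ω))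

/-- Conditional mutual information `I(X:Y|Z)`. -/
noncomputable def cmi {Ω S T U : Type*} [Fintype Ω] [Fintype S] [Fintype T] [Fintype U]
    (p : Ω → ℝ) (X : Ω → S) (Y : Ω → T) (Z : Ω → U) : ℝ :=
  ent p (fun ω => (X ω, Z ω)) + ent p (fun ω => (Y ω, Z ω))
    - ent p (fun ω => (X ω, Y ω, Z ω)) - ent p Z

end PaperIngleton

namespace PaperIngleton

open Classical

lemma prob_nonneg {Ω : Type*} [Fintype Ω] (p : Ω → ℝ) (hp : ∀ ω, 0 ≤ p ω) (E : Ω → Prop) :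
    0 ≤ prob p E := by
  unfold prob
  exact Finset.sum_nonneg fun ω _ => by by_cases h : E ω <;> simp [h, hp ω]

lemma le_prob {Ω S : Type*} [Fintype Ω] [Fintype S] (p : Ω → ℝ) (hp : ∀ ω, 0 ≤ p ω)
    (X : Ω → S) (ω : Ω) : p ω ≤ prob p (fun ω' => X ω' = X ω) := by
  unfold prob
  have := Finset.single_le_sum (f := fun ω' => if X ω' = X ω then p ω' else 0)
    (fun i _ => by by_cases h : X i = X ω <;> simp [h, hp i]) (Finset.mem_univ ω)
  simpa using this

lemma prob_mono {Ω : Type*} [Fintype Ω] (p : Ω → ℝ) (hp : ∀ ω, 0 ≤ p ω) {E F : Ω → Prop}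
    (h : ∀ ω, E ω → F ω) : prob p E ≤ prob p F := by
  unfold prob
  refine Finset.sum_le_sum fun i _ => ?_
  by_cases hE : E i
  · simp [hE, h i hE]
  · by_cases hF : F i <;> simp [hE, hF, hp i]

lemma ent_eq {Ω S : Type*} [Fintype Ω] [Fintype S] (p : Ω → ℝ) (X : Ω → S) :
    ent p X = -∑ ω, p ω * Real.log (prob p (fun ω' => X ω' = X ω)) := by
  unfold ent
  congr 1
  calc ∑ s, prob p (fun ω => X ω = s) * Real.log (prob p (fun ω => X ω = s))
      = ∑ s, ∑ ω, (if X ω = s then p ω * Real.log (prob p (fun ω' => X ω' = s)) else 0) := by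
        refine Finset.sum_congr rfl fun s _ => ?_
        rw [prob, Finset.sum_mul]
        refine Finset.sum_congr rfl fun ω _ => ?_
        by_cases h : X ω = s <;> simp [h]
    _ = ∑ ω, ∑ s, (if X ω = s then p ω * Real.log (prob p (fun ω' => X ω' = s)) else 0) :=
        Finset.sum_comm
    _ = ∑ ω, p ω * Real.log (prob p (fun ω' => X ω' = X ω)) := by
        refine Finset.sum_congr rfl fun ω _ => ?_
        simp

lemma ent_comp_le {Ω S T : Type*} [Fintype Ω] [Fintype S] [Fintype T]
    (p : Ω → ℝ) (hp : ∀ ω, 0 ≤ p ω) (g : S → T) (Z : Ω → S) :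
    ent p (fun ω => g (Z ω)) ≤ ent p Z := by
  rw [ent_eq, ent_eq, neg_le_neg_iff]
  refine Finset.sum_le_sum fun ω _ => ?_
  rcases eq_or_lt_of_le (hp ω) with h0 | h0
  · simp [← h0]
  · refine mul_le_mul_of_nonneg_left ?_ (hp ω)
    refine Real.log_le_log (lt_of_lt_of_le h0 (le_prob p hp Z ω)) ?_
    exact prob_mono p hp (fun ω' h => by rw [h])

lemma ent_comp_inj {Ω S T : Type*} [Fintype Ω] [Fintype S] [Fintype T]
    (p : Ω → ℝ) (e : S → T) (he : Function.Injective e) (Z : Ω → S) :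
    ent p (fun ω => e (Z ω)) = ent p Z := by
  rw [ent_eq, ent_eq]
  congr 1
  refine Finset.sum_congr rfl fun ω _ => ?_
  have : (prob p fun ω' => e (Z ω') = e (Z ω)) = prob p fun ω' => Z ω' = Z ω := by
    unfold prob
    refine Finset.sum_congr rfl fun ω' _ => ?_
    simp [he.eq_iff]
  rw [this]

theorem stmt4 {Ω S T V R : Type} [Fintype Ω] [Fintype S] [Fintype T] [Fintype V] [Fintype R]
    (p : Ω → ℝ) (hp : ∀ ω, 0 ≤ p ω) (hp1 : ∑ ω, p ω = 1)
    (X : Ω → S) (Y : Ω → T) (W : Ω → V) (A : Ω → R) :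
    condEnt p W A + cmi p X Y (fun ω => (W ω, A ω))
      ≤ cmi p X Y A + condEnt p W (fun ω => (X ω, A ω))
        + condEnt p W (fun ω => (Y ω, A ω)) := by
  have e1 : ent p (fun ω => (W ω, X ω, A ω)) = ent p (fun ω => (X ω, W ω, A ω)) :=
    ent_comp_inj p (fun z : S × V × R => (z.2.1, z.1, z.2.2))
      (fun a b h => by
        obtain ⟨a1, a2, a3⟩ := a; obtain ⟨b1, b2, b3⟩ := b
        simp_all [Prod.ext_iff])
      (fun ω => (X ω, W ω, A ω))
  have e2 : ent p (fun ω => (W ω, Y ω, A ω)) = ent p (fun ω => (Y ω, W ω, A ω)) :=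
    ent_comp_inj p (fun z : T × V × R => (z.2.1, z.1, z.2.2))
      (fun a b h => by
        obtain ⟨a1, a2, a3⟩ := a; obtain ⟨b1, b2, b3⟩ := b
        simp_all [Prod.ext_iff])
      (fun ω => (Y ω, W ω, A ω))
  have hmono : ent p (fun ω => (X ω, Y ω, A ω)) ≤ ent p (fun ω => (X ω, Y ω, W ω, A ω)) :=
    ent_comp_le p hp (fun z : S × T × V × R => (z.1, z.2.1, z.2.2.2))
      (fun ω => (X ω, Y ω, W ω, A ω))
  simp only [condEnt, cmi]
  linarith

end PaperIngleton
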